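/- A variety U of closure algebras contains the four-element simple closure algebra S2 if and only if U does not satisfy the McKinsey identity ◻◇x ≤ ◇◻x. -/

import Mathlib

/-- A modal algebra: a Boolean algebra with a unary operation `◇` satisfying
`◇⊥ = ⊥` and `◇(a ⊔ b) = ◇a ⊔ ◇b`. -/
class ModalAlg (M : Type) extends BooleanAlgebra M where
  dia : M → M
  dia_bot : dia ⊥ = ⊥
  dia_sup : ∀ a b : M, dia (a ⊔ b) = dia a ⊔ dia b

/-- A closure algebra: a modal algebra satisfying `a ≤ ◇a = ◇◇a`. -/
class ClosAlg (M : Type) extends ModalAlg M where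
  le_dia : ∀ a : M, a ≤ dia a
  dia_dia : ∀ a : M, dia (dia a) = dia a

/-- The possibility operator `◇`. -/
def dia {M : Type} [ModalAlg M] : M → M := ModalAlg.dia

/-- The necessity operator `◻x = ¬◇¬x`. -/
def box {M : Type} [ModalAlg M] (a : M) : M := (dia aᶜ)ᶜ

/-- A homomorphism of closure algebras: it preserves the Boolean structure
(`⊔`, `ᶜ`, `⊥`, and hence `⊓`, `⊤`) and `◇`. -/
structure ClosHom (M N : Type) [ClosAlg M] [ClosAlg N] where
  toFun : M → N
  map_sup : ∀ a b : M, toFun (a ⊔ b) = toFun a ⊔ toFun b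
  map_compl : ∀ a : M, toFun aᶜ = (toFun a)ᶜ
  map_bot : toFun ⊥ = ⊥
  map_dia : ∀ a : M, toFun (dia a) = dia (toFun a)

/-- The two-element closure algebra `2`, with identity `◇`. -/
instance : ModalAlg Bool :=
  { (inferInstance : BooleanAlgebra Bool) with
    dia := id
    dia_bot := rfl
    dia_sup := fun _ _ => rfl }

instance : ClosAlg Bool :=
  { (inferInstance : ModalAlg Bool) with
    le_dia := fun _ => le_rfl
    dia_dia := fun _ => rfl }

/-- Pointwise closure algebra structure on a product. -/
instance piClosAlg {I : Type} (A : I → Type) [∀ i, ClosAlg (A i)] : ClosAlg (∀ i, A i) :=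
  { (inferInstance : BooleanAlgebra (∀ i, A i)) with
    dia := fun x i => dia (x i)
    dia_bot := funext fun _ => ModalAlg.dia_bot
    dia_sup := fun a b => funext fun i => ModalAlg.dia_sup (a i) (b i)
    le_dia := fun a i => ClosAlg.le_dia (a i)
    dia_dia := fun a => funext fun i => ClosAlg.dia_dia (a i) }

/-- A bundled closure algebra. -/
structure CAlg where
  carrier : Type
  [str : ClosAlg carrier]

attribute [instance] CAlg.str

/-- Direct product of a family of closure algebras. -/
def CAlg.pi {I : Type} (A : I → CAlg) : CAlg := ⟨∀ i, (A i).carrier⟩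

/-- A class of closure algebras is a variety if it is closed under homomorphic images,
subalgebras (injective homomorphisms) and direct products. -/
def IsCAVariety (V : Set CAlg) : Prop :=
  (∀ A ∈ V, ∀ B : CAlg, ∀ f : ClosHom A.carrier B.carrier,
      Function.Surjective f.toFun → B ∈ V) ∧
  (∀ A : CAlg, ∀ B ∈ V, ∀ f : ClosHom A.carrier B.carrier,
      Function.Injective f.toFun → A ∈ V) ∧
  (∀ (I : Type) (A : I → CAlg), (∀ i, A i ∈ V) → CAlg.pi A ∈ V)

/-- The "simple" closure structure on a Boolean algebra: `◇x = ⊤` for `x ≠ ⊥`. -/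
def simpleClos (B : Type) [BooleanAlgebra B] [DecidableEq B] : ClosAlg B :=
  { (inferInstance : BooleanAlgebra B) with
    dia := fun x => if x = ⊥ then ⊥ else ⊤
    dia_bot := by simp
    dia_sup := by
      intro a b
      by_cases ha : a = ⊥ <;> by_cases hb : b = ⊥ <;>
        simp [ha, hb, sup_eq_bot_iff]
    le_dia := by intro a; by_cases h : a = ⊥ <;> simp [h]
    dia_dia := by
      intro a
      by_cases h : a = ⊥ <;> by_cases h2 : (⊤ : B) = ⊥ <;> simp [h, h2] }

/-- The four-element simple closure algebra `S₂`: the four-element Boolean algebra in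
which `◇a = ⊤` for every `a ≠ ⊥` (so `⊥` and `⊤` are the only open/closed elements). -/
noncomputable def S2 : CAlg := @CAlg.mk (Bool × Bool) (simpleClos _)


section Aux
variable {M : Type} [ClosAlg M]

theorem diaBot : dia (⊥ : M) = ⊥ := ModalAlg.dia_bot
theorem diaSup (a b : M) : dia (a ⊔ b) = dia a ⊔ dia b := ModalAlg.dia_sup a b
theorem diaDia (a : M) : dia (dia a) = dia a := ClosAlg.dia_dia a
theorem leDia (a : M) : a ≤ dia a := ClosAlg.le_dia a

theorem diaMono {a b : M} (h : a ≤ b) : dia a ≤ dia b := by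
  have hs := diaSup a b
  rw [sup_eq_right.mpr h] at hs
  exact hs ▸ le_sup_left

theorem boxLe (p : M) : box p ≤ p := by
  have := compl_le_compl (leDia (pᶜ))
  rwa [compl_compl] at this

theorem closHomInj (N : Type) [ClosAlg N] (f : ClosHom M N)
    (h : ∀ a, f.toFun a = ⊥ → a = ⊥) : Function.Injective f.toFun := by
  have hinf : ∀ a b, f.toFun (a ⊓ b) = f.toFun a ⊓ f.toFun b := by
    intro a b
    have e : a ⊓ b = (aᶜ ⊔ bᶜ)ᶜ := by simp
    rw [e, f.map_compl, f.map_sup, f.map_compl, f.map_compl]; simp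
  intro a b e
  have h1 : a \ b = ⊥ := h _ (by rw [sdiff_eq, hinf, f.map_compl, e]; simp)
  have h2 : b \ a = ⊥ := h _ (by rw [sdiff_eq, hinf, f.map_compl, ← e]; simp)
  exact le_antisymm (sdiff_eq_bot_iff.mp h1) (sdiff_eq_bot_iff.mp h2)

/-- The interval `[⊥, c]`, which carries a closure algebra structure. -/
def Ic (c : M) : Type := {y : M // y ≤ c}

instance (c : M) : Max (Ic c) := ⟨fun a b => ⟨a.1 ⊔ b.1, sup_le a.2 b.2⟩⟩
instance (c : M) : Min (Ic c) := ⟨fun a b => ⟨a.1 ⊓ b.1, inf_le_left.trans a.2⟩⟩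
instance (c : M) : LE (Ic c) := ⟨fun a b => a.1 ≤ b.1⟩
instance (c : M) : LT (Ic c) := ⟨fun a b => a.1 < b.1⟩

def icDL (c : M) : DistribLattice (Ic c) :=
  Function.Injective.distribLattice (Subtype.val : Ic c → M) Subtype.val_injective
    Iff.rfl Iff.rfl (fun _ _ => rfl) (fun _ _ => rfl)

def icBA (c : M) : BooleanAlgebra (Ic c) :=
  { icDL c with
    compl := fun a => ⟨a.1ᶜ ⊓ c, inf_le_right⟩
    top := ⟨c, le_rfl⟩
    bot := ⟨⊥, bot_le⟩
    le_top := fun a => a.2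
    bot_le := fun _ => bot_le (α := M)
    inf_compl_le_bot := fun a =>
      (show a.1 ⊓ (a.1ᶜ ⊓ c) ≤ (⊥:M) from le_trans (inf_le_inf_left _ inf_le_left) (by simp))
    top_le_sup_compl := fun a => by
      show c ≤ a.1 ⊔ a.1ᶜ ⊓ c
      calc c = c ⊓ (a.1 ⊔ a.1ᶜ) := by simp
        _ = c ⊓ a.1 ⊔ c ⊓ a.1ᶜ := inf_sup_left c a.1 a.1ᶜ
        _ ≤ a.1 ⊔ a.1ᶜ ⊓ c := sup_le_sup inf_le_right (le_of_eq (inf_comm c a.1ᶜ)) }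

def icClos (c : M) : ClosAlg (Ic c) :=
  { icBA c with
    dia := fun a => ⟨dia a.1 ⊓ c, inf_le_right⟩
    dia_bot := Subtype.ext (by show dia (⊥:M) ⊓ c = ⊥; simp [diaBot])
    dia_sup := fun a b => Subtype.ext (by
      show dia (a.1 ⊔ b.1) ⊓ c = dia a.1 ⊓ c ⊔ dia b.1 ⊓ c
      rw [diaSup, inf_sup_right])
    le_dia := fun a => (le_inf (leDia a.1) a.2 : a.1 ≤ dia a.1 ⊓ c)
    dia_dia := fun a => Subtype.ext (by
      show dia (dia a.1 ⊓ c) ⊓ c = dia a.1 ⊓ c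
      apply le_antisymm
      · exact inf_le_inf_right c ((diaMono inf_le_left).trans (le_of_eq (diaDia a.1)))
      · exact le_inf (leDia _) inf_le_right) }

end Aux

theorem s2_not_mck : ¬ (∀ x : S2.carrier, box (dia x) ≤ dia (box x)) := fun h => by
  letI : ClosAlg (Bool × Bool) := S2.str
  have h2 : box (dia ((true,false) : Bool × Bool)) ≤ dia (box (true,false)) := h _
  have e1 : box (dia ((true,false) : Bool × Bool)) = ⊤ := rfl
  have e2 : dia (box ((true,false) : Bool × Bool)) = ⊥ := rfl
  rw [e1, e2] at h2
  have h3 : ((⊤ : Bool × Bool) : Bool × Bool).1 ≤ (⊥ : Bool × Bool).1 := h2.1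
  exact absurd (h3 : (true : Bool) ≤ false) (by decide)

theorem s2_mem (U : Set CAlg) (hU : IsCAVariety U) (A : CAlg) (hA : A ∈ U)
    (x : A.carrier) (hx : ¬ box (dia x) ≤ dia (box x)) : S2 ∈ U := by
  obtain ⟨M⟩ := A
  rename_i instM
  set c : M := box (dia x) ⊓ box (dia xᶜ) with hc
  have hcbot : c ≠ ⊥ := by
    intro hbot
    apply hx
    have hdisj : Disjoint (box (dia x)) (box (dia xᶜ)) := disjoint_iff.mpr hbot
    have h2 : box (dia x) ≤ (box (dia xᶜ))ᶜ := le_compl_iff_disjoint_right.mpr hdisj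
    have h3 : (box (dia xᶜ))ᶜ = dia (box x) := compl_compl _
    rwa [h3] at h2
  have hopen : dia cᶜ = cᶜ := by
    have e : cᶜ = dia ((dia x)ᶜ) ⊔ dia ((dia xᶜ)ᶜ) := by
      rw [hc, compl_inf]
      show (dia ((dia x)ᶜ))ᶜᶜ ⊔ (dia ((dia xᶜ)ᶜ))ᶜᶜ = _
      rw [compl_compl, compl_compl]
    rw [e, diaSup, diaDia, diaDia]
  have key : ∀ y : M, dia y ⊓ c ≤ dia (y ⊓ c) := by
    intro y
    have h1 : dia y = dia (y ⊓ c) ⊔ dia (y ⊓ cᶜ) := by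
      rw [← diaSup, ← inf_sup_left, sup_compl_eq_top, inf_top_eq]
    have h2 : dia (y ⊓ cᶜ) ≤ cᶜ := le_trans (diaMono inf_le_right) (le_of_eq hopen)
    have h3 : dia y ≤ dia (y ⊓ c) ⊔ cᶜ := by rw [h1]; exact sup_le_sup_left h2 _
    calc dia y ⊓ c ≤ (dia (y ⊓ c) ⊔ cᶜ) ⊓ c := inf_le_inf_right c h3
      _ = dia (y ⊓ c) ⊓ c ⊔ cᶜ ⊓ c := inf_sup_right _ _ _
      _ ≤ dia (y ⊓ c) := by simp
  have hcx : c ≤ dia x := le_trans inf_le_left (boxLe _)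
  have hcx' : c ≤ dia xᶜ := le_trans inf_le_right (boxLe _)
  have hdu : c ≤ dia (x ⊓ c) := le_trans (le_inf hcx le_rfl) (key x)
  have hdv : c ≤ dia (xᶜ ⊓ c) := le_trans (le_inf hcx' le_rfl) (key xᶜ)
  have hu : x ⊓ c ≠ ⊥ := by
    intro e; apply hcbot
    have h5 := hdu; rw [e, diaBot] at h5; exact le_bot_iff.mp h5
  have hv : xᶜ ⊓ c ≠ ⊥ := by
    intro e; apply hcbot
    have h5 := hdv; rw [e, diaBot] at h5; exact le_bot_iff.mp h5
  have huv : (x ⊓ c) ⊔ (xᶜ ⊓ c) = c := by rw [← inf_sup_right]; simp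
  letI instN : ClosAlg (Ic c) := icClos c
  let N : CAlg := @CAlg.mk (Ic c) instN
  let f : ClosHom M (Ic c) :=
  { toFun := fun y => ⟨y ⊓ c, inf_le_right⟩
    map_sup := fun a b => Subtype.ext (by show (a ⊔ b) ⊓ c = a ⊓ c ⊔ b ⊓ c; rw [inf_sup_right])
    map_compl := fun a => Subtype.ext (by
      show aᶜ ⊓ c = (a ⊓ c)ᶜ ⊓ c
      rw [compl_inf, inf_sup_right]; simp)
    map_bot := Subtype.ext (by show (⊥:M) ⊓ c = ⊥; simp)
    map_dia := fun a => Subtype.ext (by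
      show dia a ⊓ c = dia (a ⊓ c) ⊓ c
      exact le_antisymm (le_inf (key a) inf_le_right)
        (inf_le_inf_right c (diaMono inf_le_left))) }
  have fsurj : Function.Surjective f.toFun := by
    intro w
    exact ⟨w.1, Subtype.ext (by show w.1 ⊓ c = w.1; exact inf_eq_left.mpr w.2)⟩
  have hN : N ∈ U := hU.1 (@CAlg.mk M instM) hA N f fsurj
  letI : ClosAlg (Bool × Bool) := S2.str
  let g : ClosHom (Bool × Bool) (Ic c) :=
  { toFun := fun z => ⟨(if z.1 then x ⊓ c else ⊥) ⊔ (if z.2 then xᶜ ⊓ c else ⊥),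
      sup_le (by split <;> simp) (by split <;> simp)⟩
    map_sup := fun a b => Subtype.ext (by
      rcases a with ⟨p, q⟩; rcases b with ⟨p', q'⟩
      cases p <;> cases q <;> cases p' <;> cases q'
      · show (⊥:M) ⊔ (⊥:M) = ((⊥:M) ⊔ (⊥:M)) ⊔ ((⊥:M) ⊔ (⊥:M))
        simp
      · show (⊥:M) ⊔ (xᶜ ⊓ c) = ((⊥:M) ⊔ (⊥:M)) ⊔ ((⊥:M) ⊔ (xᶜ ⊓ c))
        simp
      · show (x ⊓ c) ⊔ (⊥:M) = ((⊥:M) ⊔ (⊥:M)) ⊔ ((x ⊓ c) ⊔ (⊥:M))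
        simp
      · show (x ⊓ c) ⊔ (xᶜ ⊓ c) = ((⊥:M) ⊔ (⊥:M)) ⊔ ((x ⊓ c) ⊔ (xᶜ ⊓ c))
        simp
      · show (⊥:M) ⊔ (xᶜ ⊓ c) = ((⊥:M) ⊔ (xᶜ ⊓ c)) ⊔ ((⊥:M) ⊔ (⊥:M))
        simp
      · show (⊥:M) ⊔ (xᶜ ⊓ c) = ((⊥:M) ⊔ (xᶜ ⊓ c)) ⊔ ((⊥:M) ⊔ (xᶜ ⊓ c))
        simp
      · show (x ⊓ c) ⊔ (xᶜ ⊓ c) = ((⊥:M) ⊔ (xᶜ ⊓ c)) ⊔ ((x ⊓ c) ⊔ (⊥:M))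
        simp [sup_comm]
      · show (x ⊓ c) ⊔ (xᶜ ⊓ c) = ((⊥:M) ⊔ (xᶜ ⊓ c)) ⊔ ((x ⊓ c) ⊔ (xᶜ ⊓ c))
        simp [sup_comm, sup_assoc, sup_left_comm]
      · show (x ⊓ c) ⊔ (⊥:M) = ((x ⊓ c) ⊔ (⊥:M)) ⊔ ((⊥:M) ⊔ (⊥:M))
        simp
      · show (x ⊓ c) ⊔ (xᶜ ⊓ c) = ((x ⊓ c) ⊔ (⊥:M)) ⊔ ((⊥:M) ⊔ (xᶜ ⊓ c))
        simp
      · show (x ⊓ c) ⊔ (⊥:M) = ((x ⊓ c) ⊔ (⊥:M)) ⊔ ((x ⊓ c) ⊔ (⊥:M))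
        simp
      · show (x ⊓ c) ⊔ (xᶜ ⊓ c) = ((x ⊓ c) ⊔ (⊥:M)) ⊔ ((x ⊓ c) ⊔ (xᶜ ⊓ c))
        simp [sup_comm, sup_assoc, sup_left_comm]
      · show (x ⊓ c) ⊔ (xᶜ ⊓ c) = ((x ⊓ c) ⊔ (xᶜ ⊓ c)) ⊔ ((⊥:M) ⊔ (⊥:M))
        simp
      · show (x ⊓ c) ⊔ (xᶜ ⊓ c) = ((x ⊓ c) ⊔ (xᶜ ⊓ c)) ⊔ ((⊥:M) ⊔ (xᶜ ⊓ c))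
        simp [sup_comm, sup_assoc, sup_left_comm]
      · show (x ⊓ c) ⊔ (xᶜ ⊓ c) = ((x ⊓ c) ⊔ (xᶜ ⊓ c)) ⊔ ((x ⊓ c) ⊔ (⊥:M))
        simp [sup_comm, sup_assoc, sup_left_comm]
      · show (x ⊓ c) ⊔ (xᶜ ⊓ c) = ((x ⊓ c) ⊔ (xᶜ ⊓ c)) ⊔ ((x ⊓ c) ⊔ (xᶜ ⊓ c))
        simp)
    map_compl := fun a => Subtype.ext (by
      rcases a with ⟨p, q⟩
      cases p <;> cases q
      · show (x ⊓ c) ⊔ (xᶜ ⊓ c) = ((⊥:M) ⊔ (⊥:M))ᶜ ⊓ c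
        simp [huv]
      · show (x ⊓ c) ⊔ (⊥:M) = ((⊥:M) ⊔ (xᶜ ⊓ c))ᶜ ⊓ c
        rw [sup_bot_eq, bot_sup_eq, compl_inf, inf_sup_right, compl_compl]
        simp
      · show (⊥:M) ⊔ (xᶜ ⊓ c) = ((x ⊓ c) ⊔ (⊥:M))ᶜ ⊓ c
        rw [bot_sup_eq, sup_bot_eq, compl_inf, inf_sup_right]
        simp
      · show (⊥:M) ⊔ (⊥:M) = ((x ⊓ c) ⊔ (xᶜ ⊓ c))ᶜ ⊓ c
        rw [huv]
        simp)
    map_bot := Subtype.ext (by show (⊥:M) ⊔ (⊥:M) = ⊥; simp)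
    map_dia := fun z => Subtype.ext (by
      rcases z with ⟨p, q⟩
      cases p <;> cases q
      · show (⊥:M) ⊔ (⊥:M) = dia ((⊥:M) ⊔ (⊥:M)) ⊓ c
        simp [diaBot]
      · show (x ⊓ c) ⊔ (xᶜ ⊓ c) = dia ((⊥:M) ⊔ (xᶜ ⊓ c)) ⊓ c
        rw [huv, bot_sup_eq]
        exact (inf_eq_right.mpr hdv).symm
      · show (x ⊓ c) ⊔ (xᶜ ⊓ c) = dia ((x ⊓ c) ⊔ (⊥:M)) ⊓ c
        rw [huv, sup_bot_eq]
        exact (inf_eq_right.mpr hdu).symm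
      · show (x ⊓ c) ⊔ (xᶜ ⊓ c) = dia ((x ⊓ c) ⊔ (xᶜ ⊓ c)) ⊓ c
        rw [huv]
        exact (inf_eq_right.mpr (leDia c)).symm) }
  have ginj : Function.Injective g.toFun := by
    apply closHomInj
    rintro ⟨p, q⟩ hz
    cases p <;> cases q
    · rfl
    · exact absurd (by have h6 : (⊥:M) ⊔ (xᶜ ⊓ c) = ⊥ := congrArg Subtype.val hz; simpa using h6) hv
    · exact absurd (by have h6 : (x ⊓ c) ⊔ (⊥:M) = ⊥ := congrArg Subtype.val hz; simpa using h6) hu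
    · exfalso; apply hcbot
      have h6 : (x ⊓ c) ⊔ (xᶜ ⊓ c) = (⊥:M) := congrArg Subtype.val hz
      rw [huv] at h6; exact h6
  exact hU.2.1 S2 N hN g ginj

/-- a variety `U` of closure algebras contains `S₂` if and only if `U` does
not satisfy the McKinsey identity `◻◇x ≤ ◇◻x`. -/
theorem stmt7 (U : Set CAlg) (hU : IsCAVariety U) :
    S2 ∈ U ↔ ¬ (∀ A ∈ U, ∀ x : A.carrier, box (dia x) ≤ dia (box x)) := by
  constructor
  · intro hS2 h
    exact s2_not_mck (h S2 hS2)
  · intro h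
    push_neg at h
    obtain ⟨A, hA, x, hx⟩ := h
    exact s2_mem U hU A hA x hx
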